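/- A natural number m is a sum of three rational squares if and only if it is a sum of three integer squares. -/
import Mathlib

set_option maxHeartbeats 1000000

/-- Division with remainder of absolute value at most `n/2`. -/
lemma div_near (n x : ℤ) (hn : 0 < n) : ∃ w r : ℤ, x = n * w + r ∧ 4 * r ^ 2 ≤ n ^ 2 := by
  by_cases h : 2 * (x % n) ≤ n
  · refine ⟨x / n, x % n, by rw [Int.mul_ediv_add_emod], ?_⟩
    have h0 : 0 ≤ x % n := Int.emod_nonneg x hn.ne'
    nlinarith
  · refine ⟨x / n + 1, x % n - n, by have := Int.mul_ediv_add_emod x n; ring_nf; omega, ?_⟩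
    have h1 : x % n < n := Int.emod_lt_of_pos x hn
    push_neg at h
    nlinarith

/-- Davenport–Cassels descent for the form `x² + y² + z²`. -/
lemma descent (m : ℤ) : ∀ n : ℕ, 0 < n → ∀ x y z : ℤ,
    x ^ 2 + y ^ 2 + z ^ 2 = m * (n : ℤ) ^ 2 → ∃ a b c : ℤ, a ^ 2 + b ^ 2 + c ^ 2 = m := by
  intro n
  induction n using Nat.strong_induction_on with
  | _ n ih =>
  intro hn x y z h
  have hNpos : (0 : ℤ) < (n : ℤ) := by exact_mod_cast hn
  obtain ⟨w1, r1, e1, b1⟩ := div_near (n : ℤ) x hNpos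
  obtain ⟨w2, r2, e2, b2⟩ := div_near (n : ℤ) y hNpos
  obtain ⟨w3, r3, e3, b3⟩ := div_near (n : ℤ) z hNpos
  subst e1 e2 e3
  set N : ℤ := (n : ℤ) with hN
  set k : ℤ := m * N - 2 * ((N * w1 + r1) * w1 + (N * w2 + r2) * w2 + (N * w3 + r3) * w3)
      + N * (w1 ^ 2 + w2 ^ 2 + w3 ^ 2) with hk
  have hfr : r1 ^ 2 + r2 ^ 2 + r3 ^ 2 = N * k := by
    rw [hk]; linear_combination h
  have hk0 : 0 ≤ k := by nlinarith [sq_nonneg r1, sq_nonneg r2, sq_nonneg r3]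
  rcases eq_or_lt_of_le hk0 with hk0' | hkpos
  · -- remainder is zero: the point is integral
    have hr : r1 ^ 2 + r2 ^ 2 + r3 ^ 2 = 0 := by rw [hfr, ← hk0', mul_zero]
    have hr1 : r1 = 0 := by nlinarith [sq_nonneg r1, sq_nonneg r2, sq_nonneg r3]
    have hr2 : r2 = 0 := by nlinarith [sq_nonneg r1, sq_nonneg r2, sq_nonneg r3]
    have hr3 : r3 = 0 := by nlinarith [sq_nonneg r1, sq_nonneg r2, sq_nonneg r3]
    refine ⟨w1, w2, w3, ?_⟩
    have h2 : N ^ 2 * (w1 ^ 2 + w2 ^ 2 + w3 ^ 2) = N ^ 2 * m := by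
      subst hr1 hr2 hr3
      linear_combination h
    exact mul_left_cancel₀ (pow_ne_zero 2 hNpos.ne') h2
  · -- descent step
    have hklt : k < N := by nlinarith
    set x : ℤ := N * w1 + r1 with hx
    set y : ℤ := N * w2 + r2 with hy
    set z : ℤ := N * w3 + r3 with hz
    set a : ℤ := w1 ^ 2 + w2 ^ 2 + w3 ^ 2 - m with ha
    set bb : ℤ := 2 * m * N - 2 * (x * w1 + y * w2 + z * w3) with hbb
    have hkab : k = a * N + bb := by rw [hk, ha, hbb, hx, hy, hz]; ring
    have hnew : (a * x + bb * w1) ^ 2 + (a * y + bb * w2) ^ 2 + (a * z + bb * w3) ^ 2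
        = m * k ^ 2 := by
      rw [hkab, ha, hbb, hx, hy, hz]
      linear_combination (w1 ^ 2 + w2 ^ 2 + w3 ^ 2 - m) ^ 2 * h
    have hkn : (k.toNat : ℤ) = k := Int.toNat_of_nonneg hk0
    have hlt : k.toNat < n := by omega
    have hpos : 0 < k.toNat := by omega
    exact ih k.toNat hlt hpos _ _ _ (by rw [hkn]; exact hnew)

theorem sum_three_rational_squares_iff_integer (m : ℕ) :
    (∃ x y z : ℚ, x ^ 2 + y ^ 2 + z ^ 2 = (m : ℚ)) ↔
      (∃ a b c : ℤ, a ^ 2 + b ^ 2 + c ^ 2 = (m : ℤ)) := by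
  constructor
  · rintro ⟨x, y, z, h⟩
    have hdx : ((x.den : ℚ)) ≠ 0 := Nat.cast_ne_zero.mpr x.den_nz
    have hdy : ((y.den : ℚ)) ≠ 0 := Nat.cast_ne_zero.mpr y.den_nz
    have hdz : ((z.den : ℚ)) ≠ 0 := Nat.cast_ne_zero.mpr z.den_nz
    have hx : (x.num : ℚ) = x * (x.den : ℚ) :=
      (div_eq_iff hdx).mp (Rat.num_div_den x)
    have hy : (y.num : ℚ) = y * (y.den : ℚ) :=
      (div_eq_iff hdy).mp (Rat.num_div_den y)
    have hz : (z.num : ℚ) = z * (z.den : ℚ) :=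
      (div_eq_iff hdz).mp (Rat.num_div_den z)
    set n : ℕ := x.den * y.den * z.den with hn
    have hnpos : 0 < n := by positivity
    set X : ℤ := x.num * ((y.den : ℤ) * (z.den : ℤ)) with hX
    set Y : ℤ := y.num * ((x.den : ℤ) * (z.den : ℤ)) with hY
    set Z : ℤ := z.num * ((x.den : ℤ) * (y.den : ℤ)) with hZ
    have key : X ^ 2 + Y ^ 2 + Z ^ 2 = (m : ℤ) * (n : ℤ) ^ 2 := by
      have hq : ((X : ℚ)) ^ 2 + (Y : ℚ) ^ 2 + (Z : ℚ) ^ 2 = (m : ℚ) * (n : ℚ) ^ 2 := by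
        rw [hX, hY, hZ, hn]
        push_cast
        rw [hx, hy, hz]
        linear_combination
          ((x.den : ℚ) * (y.den : ℚ) * (z.den : ℚ)) ^ 2 * h
      exact_mod_cast hq
    exact descent (m : ℤ) n hnpos X Y Z key
  · rintro ⟨a, b, c, h⟩
    refine ⟨(a : ℚ), (b : ℚ), (c : ℚ), ?_⟩
    exact_mod_cast congrArg (fun t : ℤ => (t : ℚ)) h
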